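/- For the second Ding–Helleseth sequence, every a ∈ Q satisfies S(ξ_N^a) = −(q+1)/2. -/

import Mathlib

open Finset

/-- `ξ_N = exp(2πi/N)`, a primitive `N`-th root of unity. -/
noncomputable def DHxi (N : ℕ) : ℂ := Complex.exp (2 * Real.pi * Complex.I / N)

/-- Gauss period: `Σ_{a ∈ D} ξ_N^a`. -/
noncomputable def DHeta (N : ℕ) (D : Finset (ZMod N)) : ℂ := ∑ a ∈ D, DHxi N ^ a.val

/-- Ding–Helleseth generalized cyclotomic class
`D₀ = {g^(2t) x^i : 0 ≤ t ≤ e/2 - 1, i ∈ {0,1}}` in `ZMod (p*q)`, where `e = (p-1)(q-1)/2`. -/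
def DHD0 (p q g x : ℕ) : Finset (ZMod (p * q)) :=
  (Finset.range ((p - 1) * (q - 1) / 4) ×ˢ Finset.range 2).image
    (fun ti => (g : ZMod (p * q)) ^ (2 * ti.1) * (x : ZMod (p * q)) ^ ti.2)

/-- `D₁ = g · D₀`. -/
def DHD1 (p q g x : ℕ) : Finset (ZMod (p * q)) :=
  (DHD0 p q g x).image (fun d => (g : ZMod (p * q)) * d)

/-- `P = {p, 2p, …, (q-1)p}` as a subset of `ZMod (p*q)`. -/
def DHP (p q : ℕ) : Finset (ZMod (p * q)) :=
  (Finset.Icc 1 (q - 1)).image (fun k => ((k * p : ℕ) : ZMod (p * q)))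

/-- `Q = {q, 2q, …, (p-1)q}` as a subset of `ZMod (p*q)`. -/
def DHQ (p q : ℕ) : Finset (ZMod (p * q)) :=
  (Finset.Icc 1 (p - 1)).image (fun k => ((k * q : ℕ) : ZMod (p * q)))

/-- First Ding–Helleseth sequence: `s_i = 1` iff `i mod N ∈ D₁ ∪ P`. -/
def DHs1 (p q g x : ℕ) (i : ℕ) : ℕ :=
  if (i : ZMod (p * q)) ∈ DHD1 p q g x ∪ DHP p q then 1 else 0

/-- Second Ding–Helleseth sequence: `s_i = 1` iff `i mod N ∈ D₁ ∪ Q`. -/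
def DHs2 (p q g x : ℕ) (i : ℕ) : ℕ :=
  if (i : ZMod (p * q)) ∈ DHD1 p q g x ∪ DHQ p q then 1 else 0

/-- Circulant matrix of the first sequence: `a_{i,j} = s_{(i-j) mod N}`. -/
noncomputable def DHA1 (p q g x : ℕ) : Matrix (Fin (p * q)) (Fin (p * q)) ℂ :=
  fun i j => (DHs1 p q g x ((((i : ℕ) : ZMod (p * q)) - ((j : ℕ) : ZMod (p * q))).val) : ℂ)

/-- Circulant matrix of the second sequence: `a_{i,j} = s_{(i-j) mod N}`. -/
noncomputable def DHA2 (p q g x : ℕ) : Matrix (Fin (p * q)) (Fin (p * q)) ℂ :=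
  fun i j => (DHs2 p q g x ((((i : ℕ) : ZMod (p * q)) - ((j : ℕ) : ZMod (p * q))).val) : ℂ)

/-- `S(z) = Σ_{i=0}^{N-1} s_i z^i` for the first sequence. -/
noncomputable def DHSval1 (p q g x : ℕ) (z : ℂ) : ℂ :=
  ∑ i ∈ Finset.range (p * q), (DHs1 p q g x i : ℂ) * z ^ i

/-- `S(z) = Σ_{i=0}^{N-1} s_i z^i` for the second sequence. -/
noncomputable def DHSval2 (p q g x : ℕ) (z : ℂ) : ℂ :=
  ∑ i ∈ Finset.range (p * q), (DHs2 p q g x i : ℂ) * z ^ i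

/-- `S(2) = Σ_{i=0}^{N-1} s_i 2^i` for the first sequence, as a natural number. -/
def DHS2num1 (p q g x : ℕ) : ℕ := ∑ i ∈ Finset.range (p * q), DHs1 p q g x i * 2 ^ i

/-- `S(2) = Σ_{i=0}^{N-1} s_i 2^i` for the second sequence, as a natural number. -/
def DHS2num2 (p q g x : ℕ) : ℕ := ∑ i ∈ Finset.range (p * q), DHs2 p q g x i * 2 ^ i

/-- Nonzero quadratic residues modulo `q`. -/
def DHQR (q : ℕ) [NeZero q] : Finset (ZMod q) :=
  Finset.univ.filter (fun a => a ≠ 0 ∧ ∃ b : ZMod q, b * b = a)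

/-- Quadratic nonresidues modulo `q`. -/
def DHQNR (q : ℕ) [NeZero q] : Finset (ZMod q) :=
  Finset.univ.filter (fun a => a ≠ 0 ∧ ¬∃ b : ZMod q, b * b = a)

lemma DH_pow_mod {z : ℂ} {p : ℕ} (h : z ^ p = 1) (n : ℕ) : z ^ n = z ^ (n % p) := by
  conv_lhs => rw [← Nat.mod_add_div n p]
  rw [pow_add, pow_mul, h, one_pow, mul_one]

lemma DH_geom {z : ℂ} {p : ℕ} (hp : z ^ p = 1) (hz : z ≠ 1) :
    ∑ k ∈ Finset.range p, z ^ k = 0 := by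
  rw [geom_sum_eq hz, hp, sub_self, zero_div]

lemma DH_per_shift {M : ℕ} (f : ℕ → ℂ) (h : ∀ t, f (t + M) = f t) :
    ∀ n j, f (j + M * n) = f j := by
  intro n
  induction n with
  | zero => simp
  | succ k ih =>
    intro j
    rw [Nat.mul_succ, ← Nat.add_assoc, h, ih]

lemma DH_sum_periodic {M : ℕ} (f : ℕ → ℂ) (h : ∀ t, f (t + M) = f t) (K : ℕ) :
    ∑ t ∈ Finset.range (M * K), f t = K • ∑ t ∈ Finset.range M, f t := by
  induction K with
  | zero => simp
  | succ k ih =>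
    rw [Nat.mul_succ, Finset.sum_range_add, ih, succ_nsmul]
    congr 1
    refine Finset.sum_congr rfl fun j _ => ?_
    rw [Nat.add_comm (M * k) j, DH_per_shift f h]

lemma DH_sum_double (f : ℕ → ℂ) (n : ℕ) :
    ∑ s ∈ Finset.range (2 * n), f s = ∑ t ∈ Finset.range n, (f (2 * t) + f (2 * t + 1)) := by
  induction n with
  | zero => simp
  | succ k ih =>
    rw [Nat.mul_succ, Finset.sum_range_succ, Finset.sum_range_succ, Finset.sum_range_succ, ih]
    ring

lemma DH_pow_modeq {M : Type*} [Monoid M] {u : M} (hu : IsUnit u) {a b : ℕ} (h : u ^ a = u ^ b) :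
    a ≡ b [MOD orderOf u] := by
  lift u to Mˣ using hu
  rw [show orderOf (u : M) = orderOf u from orderOf_units]
  exact pow_eq_pow_iff_modEq.mp (Units.ext (by simpa using h))

lemma DH_sum_zmod {p : ℕ} [NeZero p] (f : ℕ → ℂ) :
    ∑ u : ZMod p, f u.val = ∑ k ∈ Finset.range p, f k := by
  refine Finset.sum_nbij' (fun u => u.val) (fun k => (k : ZMod p)) ?_ ?_ ?_ ?_ ?_
  · intro u _; exact Finset.mem_range.mpr (ZMod.val_lt u)
  · intro k _; exact Finset.mem_univ _
  · intro u _; simp [ZMod.natCast_val, ZMod.cast_id]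
  · intro k hk; exact ZMod.val_cast_of_lt (Finset.mem_range.mp hk)
  · intro u _; rfl

theorem stmt13 (p q g x : ℕ) (hp : Nat.Prime p) (hq : Nat.Prime q)
    (hpo : Odd p) (hqo : Odd q) (hpq : p < q)
    (hgcd : Nat.gcd (p - 1) (q - 1) = 2)
    (hgp : orderOf (g : ZMod p) = p - 1) (hgq : orderOf (g : ZMod q) = q - 1)
    (hxp : (x : ZMod p) = (g : ZMod p)) (hxq : (x : ZMod q) = 1) :
    ∀ a ∈ DHQ p q, DHSval2 p q g x (DHxi (p * q) ^ a.val) = -(((q : ℂ) + 1) / 2) := by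
  haveI : Fact p.Prime := ⟨hp⟩
  haveI : Fact q.Prime := ⟨hq⟩
  have hpodd : p % 2 = 1 := Nat.odd_iff.mp hpo
  have hqodd : q % 2 = 1 := Nat.odd_iff.mp hqo
  have hp3 : 3 ≤ p := by have := hp.two_le; omega
  have hq3 : 3 ≤ q := by omega
  obtain ⟨P2, hP2⟩ : ∃ k, p - 1 = 2 * k := ⟨(p - 1) / 2, by omega⟩
  obtain ⟨Q2, hQ2⟩ : ∃ k, q - 1 = 2 * k := ⟨(q - 1) / 2, by omega⟩
  have hP2pos : 0 < P2 := by omega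
  have hQ2pos : 0 < Q2 := by omega
  have hNpos : 0 < p * q := Nat.mul_pos hp.pos hq.pos
  haveI : NeZero (p * q) := ⟨hNpos.ne'⟩
  have hcop : Nat.Coprime P2 Q2 := by
    have h2 : Nat.gcd (2 * P2) (2 * Q2) = 2 := by rw [← hP2, ← hQ2]; exact hgcd
    rw [Nat.gcd_mul_left] at h2
    show Nat.gcd P2 Q2 = 1
    omega
  -- units
  have hgp_unit : IsUnit (g : ZMod p) := by
    refine IsUnit.of_mul_eq_one ((g : ZMod p) ^ (p - 2)) ?_
    rw [← pow_succ', show p - 2 + 1 = p - 1 by omega, ← hgp, pow_orderOf_eq_one]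
  have hgq_unit : IsUnit (g : ZMod q) := by
    refine IsUnit.of_mul_eq_one ((g : ZMod q) ^ (q - 2)) ?_
    rw [← pow_succ', show q - 2 + 1 = q - 1 by omega, ← hgq, pow_orderOf_eq_one]
  have hndvd_gp : ¬ p ∣ g := by
    intro hd
    rw [(ZMod.natCast_eq_zero_iff g p).mpr hd] at hgp_unit
    exact not_isUnit_zero hgp_unit
  have hndvd_gq : ¬ q ∣ g := by
    intro hd
    rw [(ZMod.natCast_eq_zero_iff g q).mpr hd] at hgq_unit
    exact not_isUnit_zero hgq_unit
  have hg_unitN : IsUnit (g : ZMod (p * q)) := by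
    rw [ZMod.isUnit_iff_coprime]
    exact Nat.Coprime.mul_right (hp.coprime_iff_not_dvd.mpr hndvd_gp).symm
      (hq.coprime_iff_not_dvd.mpr hndvd_gq).symm
  have hx_unitN : IsUnit (x : ZMod (p * q)) := by
    rw [ZMod.isUnit_iff_coprime]
    refine Nat.Coprime.mul_right ?_ ?_
    · refine (hp.coprime_iff_not_dvd.mpr ?_).symm
      intro hd
      rw [(ZMod.natCast_eq_zero_iff x p).mpr hd] at hxp
      exact not_isUnit_zero (hxp ▸ hgp_unit)
    · refine (hq.coprime_iff_not_dvd.mpr ?_).symm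
      intro hd
      rw [(ZMod.natCast_eq_zero_iff x q).mpr hd] at hxq
      exact one_ne_zero hxq.symm
  set φp : ZMod (p * q) →+* ZMod p := ZMod.castHom (dvd_mul_right p q) (ZMod p) with hφp
  set φq : ZMod (p * q) →+* ZMod q := ZMod.castHom (dvd_mul_left q p) (ZMod q) with hφq
  -- disjointness
  have hD1_unit : ∀ c ∈ DHD1 p q g x, IsUnit c := by
    intro c hc
    simp only [DHD1, DHD0, Finset.mem_image] at hc
    obtain ⟨d, hd, rfl⟩ := hc
    obtain ⟨ti, _, rfl⟩ := hd
    exact hg_unitN.mul ((hg_unitN.pow _).mul (hx_unitN.pow _))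
  have hQ0 : ∀ c ∈ DHQ p q, φq c = 0 := by
    intro c hc
    simp only [DHQ, Finset.mem_image] at hc
    obtain ⟨k, _, rfl⟩ := hc
    rw [map_natCast]
    push_cast
    simp [ZMod.natCast_self]
  have hdisj : Disjoint (DHD1 p q g x) (DHQ p q) := by
    rw [Finset.disjoint_left]
    intro c hc1 hcQ
    have h0 := hQ0 c hcQ
    have hu := (hD1_unit c hc1).map φq
    rw [h0] at hu
    exact not_isUnit_zero hu
  intro a ha
  obtain ⟨m, hm, rfl⟩ := Finset.mem_image.mp ha
  rw [Finset.mem_Icc] at hm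
  have hmq_lt : m * q < p * q := (Nat.mul_lt_mul_right hq.pos).mpr (by omega)
  have haval : ((m * q : ℕ) : ZMod (p * q)).val = m * q := ZMod.val_cast_of_lt hmq_lt
  rw [haval]
  have hξ : IsPrimitiveRoot (DHxi (p * q)) (p * q) :=
    Complex.isPrimitiveRoot_exp _ hNpos.ne'
  set z : ℂ := DHxi (p * q) ^ (m * q) with hzdef
  have hz_pow : ∀ n, z ^ n = DHxi (p * q) ^ (m * q * n) := fun n => by
    rw [hzdef, ← pow_mul]
  have hzp : z ^ p = 1 := by
    rw [hz_pow, hξ.pow_eq_one_iff_dvd]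
    exact ⟨m, by ring⟩
  have hz1 : z ≠ 1 := by
    intro h
    have hd : p * q ∣ m * q := by
      have := hz_pow 1
      rw [pow_one, mul_one] at this
      rw [this] at h
      exact (hξ.pow_eq_one_iff_dvd _).mp h
    obtain ⟨c, hc⟩ := hd
    have hm' : m = p * c := Nat.eq_of_mul_eq_mul_right hq.pos (by rw [hc]; ring)
    have : p ∣ m := ⟨c, hm'⟩
    have := Nat.le_of_dvd (by omega) this
    omega
  set w : ℂ := z ^ q with hwdef
  have hwp : w ^ p = 1 := by rw [hwdef, ← pow_mul, mul_comm, pow_mul, hzp, one_pow]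
  have hw1 : w ≠ 1 := by
    intro h
    rw [hwdef, hz_pow] at h
    have hd : p * q ∣ m * q * q := (hξ.pow_eq_one_iff_dvd _).mp h
    obtain ⟨c, hc⟩ := hd
    have h1 : m * q = p * c := Nat.eq_of_mul_eq_mul_right hq.pos (by rw [hc]; ring)
    have h2 : p ∣ m * q := ⟨c, h1⟩
    rcases (Nat.Prime.dvd_mul hp).mp h2 with h3 | h3
    · have := Nat.le_of_dvd (by omega) h3; omega
    · exact absurd ((Nat.prime_dvd_prime_iff_eq hp hq).mp h3) hpq.ne
  -- rewrite the sum
  rw [DHSval2]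
  rw [show (∑ i ∈ range (p * q), (DHs2 p q g x i : ℂ) * z ^ i)
      = ∑ c : ZMod (p * q), (DHs2 p q g x c.val : ℂ) * z ^ c.val from
    (DH_sum_zmod (fun i => (DHs2 p q g x i : ℂ) * z ^ i)).symm]
  have hsimp : ∀ c : ZMod (p * q), (DHs2 p q g x c.val : ℂ) * z ^ c.val
      = if c ∈ DHD1 p q g x ∪ DHQ p q then z ^ c.val else 0 := by
    intro c
    rw [DHs2]
    have : ((c.val : ℕ) : ZMod (p * q)) = c := by
      simp [ZMod.natCast_val, ZMod.cast_id]
    rw [this]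
    split <;> simp
  rw [Finset.sum_congr rfl fun c _ => hsimp c, Finset.sum_ite_mem, Finset.univ_inter,
    Finset.sum_union hdisj]
  -- the Q part
  have hQsum : ∑ c ∈ DHQ p q, z ^ c.val = -1 := by
    rw [DHQ, Finset.sum_image]
    · have hterm : ∀ k ∈ Finset.Icc 1 (p - 1), z ^ ((k * q : ℕ) : ZMod (p * q)).val = w ^ k := by
        intro k hk
        rw [Finset.mem_Icc] at hk
        rw [ZMod.val_cast_of_lt ((Nat.mul_lt_mul_right hq.pos).mpr (by omega)),
          mul_comm, pow_mul]
      rw [Finset.sum_congr rfl hterm]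
      have hIcc : Finset.Icc 1 (p - 1) = (Finset.range p).erase 0 := by
        ext k
        simp only [Finset.mem_Icc, Finset.mem_erase, Finset.mem_range]
        omega
      rw [hIcc]
      have h0 := Finset.add_sum_erase (Finset.range p) (fun k => w ^ k)
        (Finset.mem_range.mpr hp.pos)
      rw [DH_geom hwp hw1] at h0
      simpa using (by linear_combination h0 : ∑ k ∈ (Finset.range p).erase 0, w ^ k = -1)
    · intro k1 hk1 k2 hk2 heq
      rw [Finset.mem_coe, Finset.mem_Icc] at hk1 hk2
      have h1 := congrArg ZMod.val heq
      rw [ZMod.val_cast_of_lt ((Nat.mul_lt_mul_right hq.pos).mpr (by omega)),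
        ZMod.val_cast_of_lt ((Nat.mul_lt_mul_right hq.pos).mpr (by omega))] at h1
      exact Nat.eq_of_mul_eq_mul_right hq.pos h1
  -- the D1 part
  have hE2 : (p - 1) * (q - 1) / 4 = P2 * Q2 := by
    rw [hP2, hQ2, show 2 * P2 * (2 * Q2) = 4 * (P2 * Q2) by ring,
      Nat.mul_div_cancel_left _ (by norm_num)]
  set F : ℕ → ℂ := fun s => z ^ ((g : ZMod p) ^ s).val with hF
  have hFper : ∀ s, F (s + (p - 1)) = F s := by
    intro s
    have : (g : ZMod p) ^ (s + (p - 1)) = (g : ZMod p) ^ s := by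
      rw [pow_add, ← hgp, pow_orderOf_eq_one, mul_one]
    simp only [hF, this]
  have hD1sum : ∑ c ∈ DHD1 p q g x, z ^ c.val = -(Q2 : ℂ) := by
    have hD1img : DHD1 p q g x = ((Finset.range (P2 * Q2) ×ˢ Finset.range 2).image
        (fun ti => (g : ZMod (p * q)) * ((g : ZMod (p * q)) ^ (2 * ti.1)
          * (x : ZMod (p * q)) ^ ti.2))) := by
      rw [DHD1, DHD0, Finset.image_image, hE2]
      rfl
    have hinj : ∀ ti ∈ ((Finset.range (P2 * Q2) ×ˢ Finset.range 2) : Finset (ℕ × ℕ)),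
        ∀ ti' ∈ ((Finset.range (P2 * Q2) ×ˢ Finset.range 2) : Finset (ℕ × ℕ)),
        (g : ZMod (p * q)) * ((g : ZMod (p * q)) ^ (2 * ti.1) * (x : ZMod (p * q)) ^ ti.2)
        = (g : ZMod (p * q)) * ((g : ZMod (p * q)) ^ (2 * ti'.1) * (x : ZMod (p * q)) ^ ti'.2)
        → ti = ti' := by
      rintro ⟨t, i⟩ hti ⟨t', i'⟩ hti' heq
      simp only [Finset.mem_product, Finset.mem_range] at hti hti'
      obtain ⟨ht, hi⟩ := hti
      obtain ⟨ht', hi'⟩ := hti'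
      -- mod q
      have eq_q : (g : ZMod q) ^ (2 * t + 1) = (g : ZMod q) ^ (2 * t' + 1) := by
        have h' := congrArg φq heq
        simp only [map_mul, map_pow, map_natCast, hxq, one_pow, mul_one] at h'
        calc (g : ZMod q) ^ (2 * t + 1) = (g : ZMod q) * (g : ZMod q) ^ (2 * t) := by ring
          _ = (g : ZMod q) * (g : ZMod q) ^ (2 * t') := h'
          _ = (g : ZMod q) ^ (2 * t' + 1) := by ring
      have hmodq : 2 * t + 1 ≡ 2 * t' + 1 [MOD q - 1] := hgq ▸ DH_pow_modeq hgq_unit eq_q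
      -- mod p
      have eq_p : (g : ZMod p) ^ (2 * t + i + 1) = (g : ZMod p) ^ (2 * t' + i' + 1) := by
        have h' := congrArg φp heq
        simp only [map_mul, map_pow, map_natCast, hxp] at h'
        calc (g : ZMod p) ^ (2 * t + i + 1)
            = (g : ZMod p) * ((g : ZMod p) ^ (2 * t) * (g : ZMod p) ^ i) := by ring
          _ = (g : ZMod p) * ((g : ZMod p) ^ (2 * t') * (g : ZMod p) ^ i') := h'
          _ = (g : ZMod p) ^ (2 * t' + i' + 1) := by ring
      have hmodp : 2 * t + i + 1 ≡ 2 * t' + i' + 1 [MOD p - 1] := hgp ▸ DH_pow_modeq hgp_unit eq_p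
      -- parity forces i = i'
      have hmod2 : (2 * t + i + 1) % 2 = (2 * t' + i' + 1) % 2 :=
        Nat.ModEq.of_dvd ⟨P2, hP2⟩ hmodp
      have hii : i = i' := by omega
      subst hii
      -- divisibilities
      have d1 : (P2 : ℤ) ∣ (t' : ℤ) - t := by
        have hd := hmodp.dvd
        rw [hP2] at hd
        push_cast at hd
        have hd2 : (2 : ℤ) * P2 ∣ 2 * ((t' : ℤ) - t) := by
          convert hd using 1
          ring
        exact (mul_dvd_mul_iff_left (two_ne_zero (α := ℤ))).mp hd2
      have d2 : (Q2 : ℤ) ∣ (t' : ℤ) - t := by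
        have hd := hmodq.dvd
        rw [hQ2] at hd
        push_cast at hd
        have hd2 : (2 : ℤ) * Q2 ∣ 2 * ((t' : ℤ) - t) := by
          convert hd using 1
          ring
        exact (mul_dvd_mul_iff_left (two_ne_zero (α := ℤ))).mp hd2
      have dmul : ((P2 : ℤ) * Q2) ∣ (t' : ℤ) - t :=
        (Nat.isCoprime_iff_coprime.mpr hcop).mul_dvd d1 d2
      have habs : |(t' : ℤ) - t| < (P2 : ℤ) * Q2 := by
        rw [abs_lt]
        constructor <;> [push_cast; push_cast] <;> omega
      have := Int.eq_zero_of_abs_lt_dvd dmul habs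
      have : t = t' := by omega
      subst this
      rfl
    rw [hD1img, Finset.sum_image hinj]
    have hsummand : ∀ ti ∈ ((Finset.range (P2 * Q2) ×ˢ Finset.range 2) : Finset (ℕ × ℕ)),
        z ^ ((g : ZMod (p * q)) * ((g : ZMod (p * q)) ^ (2 * ti.1)
          * (x : ZMod (p * q)) ^ ti.2)).val = F (2 * ti.1 + ti.2 + 1) := by
      rintro ⟨t, i⟩ _
      set c := (g : ZMod (p * q)) * ((g : ZMod (p * q)) ^ (2 * t)
        * (x : ZMod (p * q)) ^ i) with hc
      have hφc : φp c = (g : ZMod p) ^ (2 * t + i + 1) := by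
        rw [hc]
        simp only [map_mul, map_pow, map_natCast, hxp]
        ring
      have hval : (φp c).val = c.val % p := by
        rw [hφp, ZMod.castHom_apply, ← ZMod.natCast_val, ZMod.val_natCast]
      rw [DH_pow_mod hzp, ← hval, hφc]
    rw [Finset.sum_congr rfl hsummand]
    rw [Finset.sum_product]
    have hstep : ∀ t : ℕ, (∑ i ∈ Finset.range 2, F (2 * t + i + 1))
        = F (2 * t + 1) + F (2 * t + 2) := by
      intro t
      rw [Finset.sum_range_succ, Finset.sum_range_one]
    rw [Finset.sum_congr rfl fun t _ => hstep t]
    have hGper : ∀ t, (fun t => F (2 * t + 1) + F (2 * t + 2)) (t + P2)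
        = (fun t => F (2 * t + 1) + F (2 * t + 2)) t := by
      intro t
      simp only []
      rw [show 2 * (t + P2) + 1 = (2 * t + 1) + (p - 1) by omega,
        show 2 * (t + P2) + 2 = (2 * t + 2) + (p - 1) by omega, hFper, hFper]
    rw [DH_sum_periodic _ hGper Q2]
    have hdouble : ∑ t ∈ Finset.range P2, (F (2 * t + 1) + F (2 * t + 2))
        = ∑ s ∈ Finset.range (2 * P2), F (s + 1) := by
      rw [DH_sum_double (fun s => F (s + 1)) P2]
    rw [hdouble, ← hP2]
    -- shift
    have h3 : F (p - 1) = F 0 := by simpa using hFper 0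
    have hshift : ∑ s ∈ Finset.range (p - 1), F (s + 1)
        = ∑ s ∈ Finset.range (p - 1), F s := by
      have h1 := Finset.sum_range_succ F (p - 1)
      have h2 := Finset.sum_range_succ' F (p - 1)
      rw [h3] at h1
      have := h2.symm.trans h1
      exact add_right_cancel this
    rw [hshift]
    -- sum over nonzero elements
    have himg : ∀ s ∈ Finset.range (p - 1), ∀ s' ∈ Finset.range (p - 1),
        (g : ZMod p) ^ s = (g : ZMod p) ^ s' → s = s' := by
      intro s hs s' hs' h
      have hmod : s % (p - 1) = s' % (p - 1) := hgp ▸ DH_pow_modeq hgp_unit h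
      rw [Nat.mod_eq_of_lt (Finset.mem_range.mp hs),
        Nat.mod_eq_of_lt (Finset.mem_range.mp hs')] at hmod
      exact hmod
    have himage : ∑ s ∈ Finset.range (p - 1), F s
        = ∑ u ∈ (Finset.range (p - 1)).image (fun s => (g : ZMod p) ^ s), z ^ u.val := by
      rw [Finset.sum_image himg]
    have hTeq : (Finset.range (p - 1)).image (fun s => (g : ZMod p) ^ s)
        = Finset.univ.erase (0 : ZMod p) := by
      apply Finset.eq_of_subset_of_card_le
      · intro u hu
        obtain ⟨s, _, rfl⟩ := Finset.mem_image.mp hu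
        exact Finset.mem_erase.mpr ⟨(hgp_unit.pow s).ne_zero, Finset.mem_univ _⟩
      · rw [Finset.card_erase_of_mem (Finset.mem_univ _), Finset.card_univ, ZMod.card,
          Finset.card_image_of_injOn (fun a ha b hb h => himg a ha b hb h),
          Finset.card_range]
    have hzero : ∑ u : ZMod p, z ^ u.val = 0 := by
      rw [DH_sum_zmod (fun k => z ^ k)]
      exact DH_geom hzp hz1
    have herase : ∑ u ∈ Finset.univ.erase (0 : ZMod p), z ^ u.val = -1 := by
      have h0 := Finset.add_sum_erase Finset.univ (fun u : ZMod p => z ^ u.val)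
        (Finset.mem_univ (0 : ZMod p))
      rw [hzero] at h0
      have h0' : (1 : ℂ) + ∑ u ∈ Finset.univ.erase (0 : ZMod p), z ^ u.val = 0 := by
        simpa using h0
      linear_combination h0'
    rw [himage, hTeq, herase]
    rw [nsmul_eq_mul]
    ring
  rw [hD1sum, hQsum]
  have hqc : (q : ℂ) = 2 * (Q2 : ℂ) + 1 := by
    have : q = 2 * Q2 + 1 := by omega
    rw [this]
    push_cast
    ring
  rw [hqc]
  ring
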